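/- (Proposition 4.7, magnetic Reynolds identity) Let L > 0, let v₀(t,x) = (L²e^{2Lt}/(2π)^{3/2})·(sin x₃, 0, 0) and Ξ₀(t,x) = (L²e^{2Lt}/(2π)³)·(sin x₃, cos x₃, 0), and define M_Ξ(t,x) = (2L³e^{2Lt}/(2π)³)·N(x₃), where N(x₃) is the 3×3 matrix whose rows are (0, 0, −cos x₃), (0, 0, sin x₃), and (cos x₃, −sin x₃, 0). Then M_Ξ(t,x) is skew-symmetric for every (t,x); moreover div(v₀ ⊗ Ξ₀ − Ξ₀ ⊗ v₀)(t,x) = 0 for all (t,x), and ∂_t Ξ₀ + div(v₀ ⊗ Ξ₀ − Ξ₀ ⊗ v₀) = div M_Ξ everywhere. -/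

import Mathlib

open scoped Matrix

/-- Outer product of two vectors in ℝ³: `(u ⊗ w)ᵢⱼ = uᵢ wⱼ`. -/
def outer (u w : Fin 3 → ℝ) : Matrix (Fin 3) (Fin 3) ℝ := fun i j => u i * w j

/-- Divergence of a matrix-valued field: `(div M)ᵢ = ∑ⱼ ∂ⱼ Mᵢⱼ`. -/
noncomputable def divMat (M : (Fin 3 → ℝ) → Matrix (Fin 3) (Fin 3) ℝ)
    (x : Fin 3 → ℝ) (i : Fin 3) : ℝ :=
  ∑ j, fderiv ℝ (fun y => M y i j) x (Pi.single j 1)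

/-- The initial velocity field `v₀(t,x) = (L²e^{2Lt}/(2π)^{3/2})·(sin x₃, 0, 0)`. -/
noncomputable def v0 (L t : ℝ) (x : Fin 3 → ℝ) : Fin 3 → ℝ :=
  ![L ^ 2 * Real.exp (2 * L * t) / (2 * Real.pi) ^ ((3 : ℝ) / 2) * Real.sin (x 2), 0, 0]

/-- The initial magnetic field `Ξ₀(t,x) = (L²e^{2Lt}/(2π)³)·(sin x₃, cos x₃, 0)`. -/
noncomputable def Xi0 (L t : ℝ) (x : Fin 3 → ℝ) : Fin 3 → ℝ :=
  ![L ^ 2 * Real.exp (2 * L * t) / (2 * Real.pi) ^ (3 : ℕ) * Real.sin (x 2),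
    L ^ 2 * Real.exp (2 * L * t) / (2 * Real.pi) ^ (3 : ℕ) * Real.cos (x 2), 0]

/-- The explicit magnetic Reynolds stress `M_Ξ(t,x) = (2L³e^{2Lt}/(2π)³)·N(x₃)`, where `N(x₃)`
has rows `(0, 0, −cos x₃)`, `(0, 0, sin x₃)`, `(cos x₃, −sin x₃, 0)`. -/
noncomputable def MXi (L t : ℝ) (x : Fin 3 → ℝ) : Matrix (Fin 3) (Fin 3) ℝ :=
  (2 * L ^ 3 * Real.exp (2 * L * t) / (2 * Real.pi) ^ (3 : ℕ)) •
    !![0, 0, -Real.cos (x 2); 0, 0, Real.sin (x 2); Real.cos (x 2), -Real.sin (x 2), 0]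

lemma fderiv_proj (f : ℝ → ℝ) {f' : ℝ} (x : Fin 3 → ℝ) (hf : HasDerivAt f f' (x 2)) (j : Fin 3) :
    fderiv ℝ (fun y : Fin 3 → ℝ => f (y 2)) x (Pi.single j 1) =
      f' * (Pi.single j (1:ℝ) : Fin 3 → ℝ) 2 := by
  have hp : HasFDerivAt (fun y : Fin 3 → ℝ => y 2)
      (ContinuousLinearMap.proj 2 : (Fin 3 → ℝ) →L[ℝ] ℝ) x :=
    (ContinuousLinearMap.proj (R := ℝ) (φ := fun _ : Fin 3 => ℝ) 2).hasFDerivAt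
  have h := hf.comp_hasFDerivAt x hp
  rw [show (fun y : Fin 3 → ℝ => f (y 2)) = f ∘ (fun y : Fin 3 → ℝ => y 2) from rfl, h.fderiv]
  simp [mul_comm]

lemma key (x : Fin 3 → ℝ) (F : (Fin 3 → ℝ) → ℝ) (g : ℝ → ℝ) (g' : ℝ)
    (hg : HasDerivAt g g' (x 2)) (hF : ∀ y, F y = g (y 2)) (j : Fin 3) :
    fderiv ℝ F x (Pi.single j 1) = g' * (Pi.single j (1:ℝ) : Fin 3 → ℝ) 2 := by
  rw [show F = fun y => g (y 2) from funext hF]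
  exact fderiv_proj g x hg j

/-- **Proposition 4.7 (magnetic Reynolds identity).** `M_Ξ` is skew-symmetric,
`div(v₀ ⊗ Ξ₀ − Ξ₀ ⊗ v₀) = 0`, and `∂_t Ξ₀ + div(v₀ ⊗ Ξ₀ − Ξ₀ ⊗ v₀) = div M_Ξ` everywhere. -/
theorem prop47_magnetic_reynolds (L : ℝ) (hL : 0 < L) :
    (∀ (t : ℝ) (x : Fin 3 → ℝ), (MXi L t x)ᵀ = -(MXi L t x)) ∧
    (∀ (t : ℝ) (x : Fin 3 → ℝ) (i : Fin 3),
      divMat (fun y => outer (v0 L t y) (Xi0 L t y) - outer (Xi0 L t y) (v0 L t y)) x i = 0) ∧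
    (∀ (t : ℝ) (x : Fin 3 → ℝ) (i : Fin 3),
      deriv (fun s => Xi0 L s x i) t +
        divMat (fun y => outer (v0 L t y) (Xi0 L t y) - outer (Xi0 L t y) (v0 L t y)) x i =
      divMat (fun y => MXi L t y) x i) := by
  have s0 : (Pi.single (0:Fin 3) (1:ℝ) : Fin 3 → ℝ) 2 = 0 := Pi.single_eq_of_ne (by decide) 1
  have s1 : (Pi.single (1:Fin 3) (1:ℝ) : Fin 3 → ℝ) 2 = 0 := Pi.single_eq_of_ne (by decide) 1
  have s2 : (Pi.single (2:Fin 3) (1:ℝ) : Fin 3 → ℝ) 2 = 1 := Pi.single_eq_same 2 1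
  have hdiv0 : ∀ (t : ℝ) (x : Fin 3 → ℝ) (i : Fin 3),
      divMat (fun y => outer (v0 L t y) (Xi0 L t y) - outer (Xi0 L t y) (v0 L t y)) x i = 0 := by
    intro t x i
    set A : ℝ := L ^ 2 * Real.exp (2 * L * t) / (2 * Real.pi) ^ ((3 : ℝ) / 2) with hA
    set B : ℝ := L ^ 2 * Real.exp (2 * L * t) / (2 * Real.pi) ^ (3 : ℕ) with hB
    have h0 : ∀ s : ℝ, HasDerivAt (fun _ : ℝ => (0:ℝ)) 0 s := fun s => hasDerivAt_const s 0
    have hsc : ∀ s : ℝ, HasDerivAt (fun s => A * B * (Real.sin s * Real.cos s))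
        (A * B * (Real.cos s * Real.cos s + Real.sin s * -Real.sin s)) s := fun s =>
      ((Real.hasDerivAt_sin s).mul (Real.hasDerivAt_cos s)).const_mul (A * B)
    unfold divMat
    rw [Fin.sum_univ_three]
    fin_cases i
    · rw [key x _ _ _ (h0 (x 2)) (fun y => by simp [outer, v0, Xi0]; try ring) 0,
        key x _ _ _ (hsc (x 2)) (fun y => by simp [outer, v0, Xi0, ← hA, ← hB]; try ring) 1,
        key x _ _ _ (h0 (x 2)) (fun y => by simp [outer, v0, Xi0]; try ring) 2,
        s0, s1, s2]
      ring
    · rw [key x _ _ _ ((hsc (x 2)).neg) (fun y => by simp [outer, v0, Xi0, ← hA, ← hB]; try ring) 0,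
        key x _ _ _ (h0 (x 2)) (fun y => by simp [outer, v0, Xi0]; try ring) 1,
        key x _ _ _ (h0 (x 2)) (fun y => by simp [outer, v0, Xi0]; try ring) 2,
        s0, s1, s2]
      ring
    · rw [key x _ _ _ (h0 (x 2)) (fun y => by simp [outer, v0, Xi0]; try ring) 0,
        key x _ _ _ (h0 (x 2)) (fun y => by simp [outer, v0, Xi0]; try ring) 1,
        key x _ _ _ (h0 (x 2)) (fun y => by simp [outer, v0, Xi0]; try ring) 2,
        s0, s1, s2]
      ring
  refine ⟨?_, hdiv0, ?_⟩
  · intro t x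
    ext i j
    fin_cases i <;> fin_cases j <;> simp [MXi] <;> try ring
  · intro t x i
    rw [hdiv0 t x i, add_zero]
    set c : ℝ := 2 * L ^ 3 * Real.exp (2 * L * t) / (2 * Real.pi) ^ (3 : ℕ) with hc
    have h0 : ∀ s : ℝ, HasDerivAt (fun _ : ℝ => (0:ℝ)) 0 s := fun s => hasDerivAt_const s 0
    have h1 : HasDerivAt (fun s : ℝ => 2 * L * s) (2 * L) t := by
      simpa using (hasDerivAt_id t).const_mul (2 * L)
    have hcos : ∀ s : ℝ, HasDerivAt (fun s => c * -Real.cos s) (c * Real.sin s) s := fun s => by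
      simpa using (Real.hasDerivAt_cos s).neg.const_mul c
    have hsin : ∀ s : ℝ, HasDerivAt (fun s => c * Real.sin s) (c * Real.cos s) s := fun s =>
      (Real.hasDerivAt_sin s).const_mul c
    have hccos : ∀ s : ℝ, HasDerivAt (fun s => c * Real.cos s) (c * -Real.sin s) s := fun s =>
      (Real.hasDerivAt_cos s).const_mul c
    unfold divMat
    rw [Fin.sum_univ_three]
    fin_cases i
    · show deriv (fun s => Xi0 L s x 0) t = _
      rw [key x _ _ _ (h0 (x 2)) (fun y => by simp [MXi]; try ring) 0,
        key x _ _ _ (h0 (x 2)) (fun y => by simp [MXi]; try ring) 1,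
        key x _ _ _ (hcos (x 2)) (fun y => by simp [MXi, ← hc]; try ring) 2,
        s0, s1, s2]
      have hD : HasDerivAt (fun s => Xi0 L s x 0)
          (2 * L * (L ^ 2 * Real.exp (2 * L * t)) / (2 * Real.pi) ^ (3:ℕ) * Real.sin (x 2)) t := by
        have h2 := ((h1.exp.const_mul (L ^ 2)).div_const ((2 * Real.pi) ^ (3:ℕ))).mul_const
          (Real.sin (x 2))
        simp only [Xi0, Matrix.cons_val_zero]
        refine h2.congr_deriv ?_
        ring
      rw [hD.deriv, hc]
      ring
    · show deriv (fun s => Xi0 L s x 1) t = _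
      rw [key x _ _ _ (h0 (x 2)) (fun y => by simp [MXi]; try ring) 0,
        key x _ _ _ (h0 (x 2)) (fun y => by simp [MXi]; try ring) 1,
        key x _ _ _ (hsin (x 2)) (fun y => by simp [MXi, ← hc]; try ring) 2,
        s0, s1, s2]
      have hD : HasDerivAt (fun s => Xi0 L s x 1)
          (2 * L * (L ^ 2 * Real.exp (2 * L * t)) / (2 * Real.pi) ^ (3:ℕ) * Real.cos (x 2)) t := by
        have h2 := ((h1.exp.const_mul (L ^ 2)).div_const ((2 * Real.pi) ^ (3:ℕ))).mul_const
          (Real.cos (x 2))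
        simp only [Xi0, Matrix.cons_val_one, Matrix.head_cons]
        refine h2.congr_deriv ?_
        ring
      rw [hD.deriv, hc]
      ring
    · show deriv (fun s => Xi0 L s x 2) t = _
      rw [key x _ _ _ (hccos (x 2)) (fun y => by simp [MXi, ← hc]; try ring) 0,
        key x _ _ _ ((hsin (x 2)).neg) (fun y => by simp [MXi, ← hc]; try ring) 1,
        key x _ _ _ (h0 (x 2)) (fun y => by simp [MXi]; try ring) 2,
        s0, s1, s2]
      have hD : HasDerivAt (fun s => Xi0 L s x 2) 0 t := by
        simp only [Xi0, Matrix.cons_val_two, Matrix.tail_cons, Matrix.head_cons]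
        exact hasDerivAt_const t 0
      rw [hD.deriv]
      ring
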